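/- Let q ≥ 3 be an odd integer and n ≥ 2 an integer. Then the period of any orientable sequence of order n over ℤ_q is at most (q^n − q^{⌈n/2⌉} − q^{⌈(n-1)/2⌉} + q)/2. -/

import Mathlib

namespace OSeq

variable {q : ℕ}

/-- The `n`-tuple (window) of the sequence `s` at position `i`. -/
def window (s : ℤ → ZMod q) (n : ℕ) (i : ℤ) : Fin n → ZMod q :=
  fun k => s (i + (k : ℕ))

/-- The reverse of an `n`-tuple. -/
def tupRev {n : ℕ} (u : Fin n → ZMod q) : Fin n → ZMod q :=
  fun k => u k.rev

/-- `m` is the (least) period of the periodic sequence `s`. -/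
def IsPeriod (s : ℤ → ZMod q) (m : ℕ) : Prop :=
  0 < m ∧ (∀ i : ℤ, s (i + (m : ℤ)) = s i) ∧
    ∀ m' : ℕ, 0 < m' → (∀ i : ℤ, s (i + (m' : ℤ)) = s i) → m ≤ m'

/-- `s` is an `n`-window sequence of period `m`. -/
def IsNWindowSeq (s : ℤ → ZMod q) (n m : ℕ) : Prop :=
  IsPeriod s m ∧ ∀ i j : ℤ, window s n i = window s n j → i ≡ j [ZMOD (m : ℤ)]

/-- `s` is an orientable sequence of order `n` and period `m`. -/
def IsOS (s : ℤ → ZMod q) (n m : ℕ) : Prop :=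
  IsNWindowSeq s n m ∧ ∀ i j : ℤ, window s n i ≠ tupRev (window s n j)

/-- `s` is a negative orientable sequence of order `n` and period `m`. -/
def IsNOS (s : ℤ → ZMod q) (n m : ℕ) : Prop :=
  IsNWindowSeq s n m ∧ ∀ i j : ℤ, window s n i ≠ - tupRev (window s n j)

/-- `s` is a special orientable sequence of order `n` and period `m`:
orientable and also negative orientable. -/
def IsSpecialOS (s : ℤ → ZMod q) (n m : ℕ) : Prop :=
  IsOS s n m ∧ ∀ i j : ℤ, window s n i ≠ - tupRev (window s n j)

/-- The weight modulo `q` of one period of `s`. -/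
def wq (s : ℤ → ZMod q) (m : ℕ) : ZMod q :=
  ∑ i ∈ Finset.range m, s (i : ℤ)

/-- The alternating sign weight modulo `q` of one period of `s`. -/
def wqA (s : ℤ → ZMod q) (m : ℕ) : ZMod q :=
  ∑ i ∈ Finset.range m, (-1 : ZMod q) ^ (m - 1 - i) * s (i : ℤ)

/-- The Lempel homomorphism `D` on sequences. -/
def D (t : ℤ → ZMod q) : ℤ → ZMod q := fun j => t (j + 1) - t j

/-- The homomorphism `A` on sequences. -/
def A (t : ℤ → ZMod q) : ℤ → ZMod q := fun j => t (j + 1) + t j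

/-- Shift of a sequence by `c`. -/
def shift (t : ℤ → ZMod q) (c : ℤ) : ℤ → ZMod q := fun i => t (i + c)

/-- `t'` is a translate of `t`. -/
def IsTranslate (t t' : ℤ → ZMod q) : Prop := ∃ c : ZMod q, ∀ i : ℤ, t' i = t i + c

/-- `t'` is an alternating sign translate of `t`. -/
def IsAltTranslate (t t' : ℤ → ZMod q) : Prop :=
  ∃ c : ZMod q, ∀ i : ℤ, t' i = t i + (if i % 2 = 0 then c else -c)

/-- Two sequences are (`n`-window) disjoint. -/
def WindowDisjoint (n : ℕ) (s t : ℤ → ZMod q) : Prop :=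
  ∀ i j : ℤ, window s n i ≠ window t n j

/-- Orientable-disjoint. -/
def ODisjoint (n : ℕ) (s t : ℤ → ZMod q) : Prop :=
  WindowDisjoint n s t ∧ ∀ i j : ℤ, window s n i ≠ tupRev (window t n j)

/-- Negative orientable-disjoint (no-disjoint). -/
def NODisjoint (n : ℕ) (s t : ℤ → ZMod q) : Prop :=
  WindowDisjoint n s t ∧ ∀ i j : ℤ, window s n i ≠ - tupRev (window t n j)

/-- Special-orientable-disjoint. -/
def SpecialODisjoint (n : ℕ) (s t : ℤ → ZMod q) : Prop :=
  ODisjoint n s t ∧ ∀ i j : ℤ, window s n i ≠ - tupRev (window t n j)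

/-- The string `a^t` appears in `s`. -/
def HasString (s : ℤ → ZMod q) (a : ZMod q) (t : ℕ) : Prop :=
  ∃ j : ℤ, ∀ k : ℕ, k < t → s (j + (k : ℤ)) = a

/-- There is a run `a^t` of `a` in `s` starting at position `j`. -/
def IsRunAt (s : ℤ → ZMod q) (a : ZMod q) (j : ℤ) (t : ℕ) : Prop :=
  (∀ k : ℕ, k < t → s (j + (k : ℤ)) = a) ∧ s (j - 1) ≠ a ∧ s (j + (t : ℤ)) ≠ a

/-- `a^t` is a maximal run of `a` in `s`: the string `a^t` appears and every
string `a^{t'}` appearing in `s` has `t' ≤ t`. -/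
def IsMaxRun (s : ℤ → ZMod q) (a : ZMod q) (t : ℕ) : Prop :=
  HasString s a t ∧ ∀ t' : ℕ, HasString s a t' → t' ≤ t

/-- `k`-th entry of the alternating string `a, -a, a, -a, ...`. -/
def altVal (a : ZMod q) (k : ℕ) : ZMod q := if k % 2 = 0 then a else -a

/-- The signed string `ạ^t` (alternating `a, -a, ...`) appears in `s`. -/
def HasSignedString (s : ℤ → ZMod q) (a : ZMod q) (t : ℕ) : Prop :=
  ∃ j : ℤ, ∀ k : ℕ, k < t → s (j + (k : ℤ)) = altVal a k

/-- There is a signed run `ạ^t` of `a` in `s` starting at position `j`. -/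
def IsSignedRunAt (s : ℤ → ZMod q) (a : ZMod q) (j : ℤ) (t : ℕ) : Prop :=
  (∀ k : ℕ, k < t → s (j + (k : ℤ)) = altVal a k) ∧
    s (j - 1) ≠ -a ∧ s (j + (t : ℤ)) ≠ altVal a t

/-- `ạ^t` is a maximal signed run of `a` in `s`. -/
def IsMaxSignedRun (s : ℤ → ZMod q) (a : ZMod q) (t : ℕ) : Prop :=
  HasSignedString s a t ∧ ∀ t' : ℕ, HasSignedString s a t' → t' ≤ t

/-- The sequence obtained from the ring sequence `[s_0,...,s_{m-1}]` of `s` by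
inserting one extra symbol `a` at ring position `r`, i.e. with ring sequence
`[s_0,...,s_{r-1}, a, s_r, ..., s_{m-1}]` of length `m+1`. -/
def insert1 (s : ℤ → ZMod q) (m r : ℕ) (a : ZMod q) : ℤ → ZMod q :=
  fun j =>
    let j' := (j % ((m : ℤ) + 1)).toNat
    if j' < r then s (j' : ℤ) else if j' = r then a else s ((j' : ℤ) - 1)

/-- The sequence obtained from the ring sequence `[s_0,...,s_{m-1}]` of `s` by
inserting the two symbols `a, -a` at ring position `r`, i.e. with ring sequence
`[s_0,...,s_{r-1}, a, -a, s_r, ..., s_{m-1}]` of length `m+2`. -/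
def insert2 (s : ℤ → ZMod q) (m r : ℕ) (a : ZMod q) : ℤ → ZMod q :=
  fun j =>
    let j' := (j % ((m : ℤ) + 2)).toNat
    if j' < r then s (j' : ℤ)
    else if j' = r then a
    else if j' = r + 1 then -a
    else s ((j' : ℤ) - 2)

/-- The operation `E_a` (with the convention `E_0(S) = S`). -/
def Emod (s : ℤ → ZMod q) (m r : ℕ) (a : ZMod q) : ℤ → ZMod q :=
  if a = 0 then s else insert1 s m r a

/-- A sequence is good (for order `n`) if every run of `0` has length at most `n-2`. -/
def GoodSeq (s : ℤ → ZMod q) (n : ℕ) : Prop :=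
  ∀ t : ℕ, HasString s 0 t → t ≤ n - 2

/-- A tuple is uniform if it is constant. -/
def Uniform {n : ℕ} (u : Fin n → ZMod q) : Prop := ∃ c : ZMod q, ∀ i, u i = c

/-- A tuple is symmetric if it equals its own reverse. -/
def Symm {n : ℕ} (u : Fin n → ZMod q) : Prop := ∀ i : Fin n, u i = u i.rev

/-- An `n`-tuple is `m`-symmetric (`m ≤ n`) if `u_i = u_{m-1-i}` for `0 ≤ i ≤ m-1`. -/
def MSymm {n : ℕ} (u : Fin n → ZMod q) (m : ℕ) (hm : m ≤ n) : Prop :=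
  ∀ i : Fin m, u (Fin.castLE hm i) = u (Fin.castLE hm i.rev)

/-- An `n`-tuple (`n ≥ 2`) is alternating. -/
def Alternating {n : ℕ} (hn : 2 ≤ n) (u : Fin n → ZMod q) : Prop :=
  u ⟨0, by omega⟩ ≠ u ⟨1, by omega⟩ ∧
    ∀ i : Fin n, u i = if (i : ℕ) % 2 = 0 then u ⟨0, by omega⟩ else u ⟨1, by omega⟩

/-- `L_n(v)`: the set of `n`-tuples whose first `n-r` entries agree with the
`(n-r)`-tuple `v`. -/
def Lset (n r : ℕ) (v : Fin (n - r) → ZMod q) : Set (Fin n → ZMod q) :=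
  {u | ∀ i : Fin (n - r), u (Fin.castLE (Nat.sub_le n r) i) = v i}

/-- The `n`-tuple `u` appears in the sequence `s`. -/
def AppearsIn (s : ℤ → ZMod q) (n : ℕ) (u : Fin n → ZMod q) : Prop :=
  ∃ i : ℤ, window s n i = u

end OSeq


namespace OSeqAux
open OSeq

variable {q n : ℕ}

lemma tupRev_tupRev (u : Fin n → ZMod q) : tupRev (tupRev u) = u := by
  funext k; simp [tupRev, Fin.rev_rev]

def glueL (n : ℕ) (p : Fin (n - 1) → ZMod q) (a : ZMod q) : Fin n → ZMod q :=
  fun k => if h : (k : ℕ) < n - 1 then p ⟨k, h⟩ else a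

def glueR (n : ℕ) (b : ZMod q) (p : Fin (n - 1) → ZMod q) : Fin n → ZMod q :=
  fun k => if _ : (k : ℕ) = 0 then b else p ⟨(k : ℕ) - 1, by have := k.isLt; omega⟩

lemma tupRev_glueR (hn : 2 ≤ n) {p : Fin (n - 1) → ZMod q} (hp : ∀ i, p i = p i.rev)
    (b : ZMod q) : tupRev (glueR n b p) = glueL n p b := by
  funext k
  have hk := k.isLt
  have hrev : (k.rev : ℕ) = n - ((k : ℕ) + 1) := Fin.val_rev k
  by_cases h : (k : ℕ) < n - 1
  · have h1 : ¬ ((k.rev : ℕ) = 0) := by omega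
    simp only [tupRev, glueR, glueL, dif_neg h1, dif_pos h]
    rw [hp ⟨(k : ℕ), h⟩]
    congr 1
    apply Fin.ext
    simp only [Fin.val_rev]
    omega
  · have h1 : (k.rev : ℕ) = 0 := by omega
    simp only [tupRev, glueR, glueL, dif_pos h1, dif_neg h]

lemma const_of_glueL_eq_glueR (hn : 2 ≤ n) {p : Fin (n - 1) → ZMod q} {c : ZMod q}
    (h : glueL n p c = glueR n c p) : ∃ d, ∀ i, p i = d := by
  refine ⟨p ⟨0, by omega⟩, ?_⟩
  intro i
  obtain ⟨k, hk⟩ := i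
  induction k with
  | zero => rfl
  | succ k ih =>
    have h1 := congrFun h ⟨k + 1, by omega⟩
    simp only [glueL, glueR] at h1
    rw [dif_pos (show k + 1 < n - 1 from hk), dif_neg (Nat.succ_ne_zero k)] at h1
    have h2 : p ⟨k + 1, hk⟩ = p ⟨k, by omega⟩ := by
      rw [h1]; congr 1
    rw [h2, ih (by omega)]

lemma window_pred {s : ℤ → ZMod q} (hn : 2 ≤ n) {p : Fin (n - 1) → ZMod q} {a : ZMod q} {i : ℤ}
    (h : window s n i = glueL n p a) :
    window s n (i - 1) = glueR n (s (i - 1)) p := by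
  funext k
  have hk := k.isLt
  by_cases h0 : (k : ℕ) = 0
  · have e : i - 1 + ((k : ℕ) : ℤ) = i - 1 := by rw [h0]; simp
    simp only [window, glueR, dif_pos h0, e]
  · have h1 := congrFun h ⟨(k : ℕ) - 1, by omega⟩
    simp only [window, glueL] at h1
    rw [dif_pos (show (k : ℕ) - 1 < n - 1 by omega)] at h1
    have e : i - 1 + ((k : ℕ) : ℤ) = i + (((k : ℕ) - 1 : ℕ) : ℤ) := by omega
    simp only [window, glueR, dif_neg h0]
    rw [e, h1]

lemma window_succ {s : ℤ → ZMod q} (hn : 2 ≤ n) {p : Fin (n - 1) → ZMod q} {b : ZMod q} {j : ℤ}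
    (h : window s n j = glueR n b p) :
    window s n (j + 1) = glueL n p (s (j + n)) := by
  funext k
  have hk := k.isLt
  by_cases hlt : (k : ℕ) < n - 1
  · have h1 := congrFun h ⟨(k : ℕ) + 1, by omega⟩
    simp only [window, glueR] at h1
    rw [dif_neg (Nat.succ_ne_zero (k : ℕ))] at h1
    have e : j + 1 + ((k : ℕ) : ℤ) = j + (((k : ℕ) + 1 : ℕ) : ℤ) := by omega
    simp only [window, glueL, dif_pos hlt]
    rw [e, h1]
    congr 1
  · have e : j + 1 + ((k : ℕ) : ℤ) = j + (n : ℤ) := by omega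
    simp only [window, glueL, dif_neg hlt]
    rw [e]

set_option maxHeartbeats 1000000 in
lemma card_pal (q k : ℕ) [NeZero q] :
    (Finset.univ.filter fun u : Fin k → ZMod q => ∀ i, u i = u i.rev).card = q ^ ((k + 1) / 2) := by
  classical
  have hcard : q ^ ((k + 1) / 2) = (Finset.univ : Finset (Fin ((k + 1) / 2) → ZMod q)).card := by
    simp [Finset.card_univ, ZMod.card]
  rw [hcard]
  refine Finset.card_bij'
    (fun u _ => fun j : Fin ((k + 1) / 2) => u ⟨j, by have := j.isLt; omega⟩)
    (fun v _ => fun i : Fin k => v ⟨min (i : ℕ) (k - 1 - (i : ℕ)), by have := i.isLt; omega⟩)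
    (fun a _ => Finset.mem_univ _) ?_ ?_ ?_
  · intro v _
    simp only [Finset.mem_filter, Finset.mem_univ, true_and]
    intro i
    congr 1
    apply Fin.ext
    simp only [Fin.val_rev]
    have := i.isLt
    omega
  · intro u hu
    have hu' := (Finset.mem_filter.mp hu).2
    funext i
    beta_reduce
    have hi := i.isLt
    by_cases hle : (i : ℕ) ≤ k - 1 - (i : ℕ)
    · congr 1; apply Fin.ext; simp; omega
    · rw [hu' i]; congr 1; apply Fin.ext; simp only [Fin.val_rev]; omega
  · intro v _
    funext j
    beta_reduce
    have hj := j.isLt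
    congr 1; apply Fin.ext; simp; omega

lemma card_unif (q k : ℕ) [NeZero q] (hk : 1 ≤ k) :
    (Finset.univ.filter fun u : Fin k → ZMod q => ∃ c, ∀ i, u i = c).card = q := by
  classical
  have himg : (Finset.univ.filter fun u : Fin k → ZMod q => ∃ c, ∀ i, u i = c)
      = Finset.univ.image (fun c : ZMod q => (fun _ : Fin k => c)) := by
    ext u
    simp only [Finset.mem_filter, Finset.mem_univ, true_and, Finset.mem_image]
    constructor
    · rintro ⟨c, hc⟩
      refine ⟨c, ?_⟩
      funext i; exact (hc i).symm
    · rintro ⟨c, rfl⟩; exact ⟨c, fun i => rfl⟩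
  have hinj : Function.Injective (fun c : ZMod q => (fun _ : Fin k => c)) := by
    intro a b hab
    exact congrFun hab ⟨0, hk⟩
  rw [himg, Finset.card_image_of_injective _ hinj, Finset.card_univ, ZMod.card]

end OSeqAux

open OSeq
open OSeqAux in
set_option maxHeartbeats 1000000 in
/-- For odd `q ≥ 3` and `n ≥ 2`, the period of any orientable sequence of order `n`
over `ℤ_q` is at most `(q^n - q^⌈n/2⌉ - q^⌈(n-1)/2⌉ + q)/2`. -/
theorem period_le_of_orientable_odd {q n m : ℕ} (hq : 3 ≤ q) (hqodd : Odd q)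
    (hn : 2 ≤ n) (s : ℤ → ZMod q) (hS : IsOS s n m) :
    2 * (m : ℤ) ≤ (q : ℤ) ^ n - (q : ℤ) ^ ((n + 1) / 2) - (q : ℤ) ^ (n / 2) + q := by
  classical
  haveI : NeZero q := ⟨by omega⟩
  obtain ⟨⟨⟨hm0, hper, -⟩, hwin⟩, horient⟩ := hS
  -- generalized periodicity
  have hperZ : ∀ (t : ℤ) (i : ℤ), s (i + t * (m : ℤ)) = s i := by
    intro t
    induction t using Int.induction_on with
    | zero => intro i; simp
    | succ k ih =>
        intro i
        have e : i + ((k : ℤ) + 1) * (m : ℤ) = (i + (k : ℤ) * m) + m := by ring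
        rw [e, hper, ih]
    | pred k ih =>
        intro i
        have h2 : s (i + (-(k : ℤ)) * m) = s i := ih i
        have e : i + (-(k : ℤ)) * m = (i + (-(k : ℤ) - 1) * m) + m := by ring
        rw [e, hper] at h2
        exact h2
  have hcong : ∀ i j : ℤ, i ≡ j [ZMOD (m : ℤ)] → window s n i = window s n j := by
    intro i j hij
    obtain ⟨t, ht⟩ := hij.dvd
    funext k
    have e : i + ((k : ℕ) : ℤ) = (j + ((k : ℕ) : ℤ)) + (-t) * (m : ℤ) := by linear_combination -ht
    show s (i + ((k : ℕ) : ℤ)) = s (j + ((k : ℕ) : ℤ))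
    rw [e, hperZ]
  -- the finset of windows
  set W : Finset (Fin n → ZMod q) :=
    Finset.image (fun i : Fin m => window s n ((i : ℕ) : ℤ)) Finset.univ with hWdef
  have hmemW : ∀ i : ℤ, window s n i ∈ W := by
    intro i
    have h0 : (0 : ℤ) < (m : ℤ) := by exact_mod_cast hm0
    have h1 : 0 ≤ i % (m : ℤ) := Int.emod_nonneg i (by omega)
    have h2 : i % (m : ℤ) < m := Int.emod_lt_of_pos i h0
    have hlt : (i % (m : ℤ)).toNat < m := by omega
    have heq : window s n i = window s n (((⟨(i % (m : ℤ)).toNat, hlt⟩ : Fin m) : ℕ) : ℤ) := by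
      apply hcong
      have hcast : (((⟨(i % (m : ℤ)).toNat, hlt⟩ : Fin m) : ℕ) : ℤ) = i % (m : ℤ) := by
        simp only [Fin.val_mk]
        omega
      rw [hcast]
      show i % (m : ℤ) = (i % (m : ℤ)) % (m : ℤ)
      rw [Int.emod_emod_of_dvd i dvd_rfl]
    rw [heq, hWdef]
    exact Finset.mem_image_of_mem _ (Finset.mem_univ _)
  have hWmem : ∀ u ∈ W, ∃ i : ℤ, window s n i = u := by
    intro u hu
    rw [hWdef] at hu
    obtain ⟨i, -, hi⟩ := Finset.mem_image.mp hu
    exact ⟨((i : ℕ) : ℤ), hi⟩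
  -- a chosen position for each window
  have hposE : ∃ pos : (Fin n → ZMod q) → ℤ, ∀ u ∈ W, window s n (pos u) = u := by
    choose f hf using hWmem
    refine ⟨fun u => if h : u ∈ W then f u h else 0, fun u h => ?_⟩
    simp only [dif_pos h]
    exact hf u h
  obtain ⟨pos, hpos⟩ := hposE
  have hcardW : W.card = m := by
    rw [hWdef]
    rw [Finset.card_image_of_injective _ ?_, Finset.card_univ, Fintype.card_fin]
    intro i j hij
    have hmod := hwin _ _ hij
    obtain ⟨t, ht⟩ := hmod.dvd
    have hi := i.isLt
    have hj := j.isLt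
    apply Fin.ext
    have hm' : ((j : ℕ) : ℤ) - ((i : ℕ) : ℤ) = (m : ℤ) * t := ht
    rcases lt_trichotomy t 0 with h | h | h
    · have h1 : (m : ℤ) * t ≤ (m : ℤ) * (-1) := by
        apply mul_le_mul_of_nonneg_left (by omega) (by positivity)
      omega
    · rw [h, mul_zero] at hm'
      omega
    · have h1 : (m : ℤ) * 1 ≤ (m : ℤ) * t := by
        apply mul_le_mul_of_nonneg_left (by omega) (by positivity)
      omega
  set Wr : Finset (Fin n → ZMod q) := W.image tupRev with hWrdef
  have hcardWr : Wr.card = m := by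
    rw [hWrdef, Finset.card_image_of_injective _ ?_, hcardW]
    intro u v huv
    have := congrArg tupRev huv
    rwa [tupRev_tupRev, tupRev_tupRev] at this
  have hWrmem : ∀ u ∈ Wr, ∃ j : ℤ, u = tupRev (window s n j) := by
    intro u hu
    obtain ⟨w, hw, hwu⟩ := Finset.mem_image.mp hu
    obtain ⟨j, hj⟩ := hWmem w hw
    exact ⟨j, by rw [← hwu, hj]⟩
  have hmemWr : ∀ j : ℤ, tupRev (window s n j) ∈ Wr := fun j =>
    Finset.mem_image_of_mem _ (hmemW j)
  -- key: for every nonconstant palindromic (n-1)-tuple there is a missing extension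
  have key : ∀ p : Fin (n - 1) → ZMod q, (∀ i, p i = p i.rev) → (¬ ∃ d, ∀ i, p i = d) →
      ∃ c : ZMod q, glueL n p c ∉ W ∧ glueL n p c ∉ Wr := by
    intro p hp hnc
    set A : Finset (ZMod q) := Finset.univ.filter (fun a => glueL n p a ∈ W) with hA
    set B : Finset (ZMod q) := Finset.univ.filter (fun b => glueR n b p ∈ W) with hB
    have hdisj : Disjoint A B := by
      rw [Finset.disjoint_left]
      intro c hcA hcB
      obtain ⟨i, hi⟩ := hWmem _ ((Finset.mem_filter.mp hcA).2)
      obtain ⟨j, hj⟩ := hWmem _ ((Finset.mem_filter.mp hcB).2)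
      exact horient i j (by rw [hi, hj, tupRev_glueR hn hp])
    have hcardAB : A.card = B.card := by
      apply Finset.card_bij (fun a _ => s (pos (glueL n p a) - 1))
      · intro a ha
        have hw := hpos _ ((Finset.mem_filter.mp ha).2)
        refine Finset.mem_filter.mpr ⟨Finset.mem_univ _, ?_⟩
        rw [← window_pred hn hw]
        exact hmemW _
      · intro a₁ h₁ a₂ h₂ heq
        have hw1 := window_pred hn (hpos _ ((Finset.mem_filter.mp h₁).2))
        have hw2 := window_pred hn (hpos _ ((Finset.mem_filter.mp h₂).2))
        have heqw : window s n (pos (glueL n p a₁) - 1) = window s n (pos (glueL n p a₂) - 1) := by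
          rw [hw1, hw2, heq]
        have hmod := hwin _ _ heqw
        have hmod' : pos (glueL n p a₁) ≡ pos (glueL n p a₂) [ZMOD (m : ℤ)] := by
          have := hmod.add_right 1
          simpa using this
        have hww := hcong _ _ hmod'
        rw [hpos _ ((Finset.mem_filter.mp h₁).2), hpos _ ((Finset.mem_filter.mp h₂).2)] at hww
        have hlast := congrFun hww ⟨n - 1, by omega⟩
        simp only [glueL] at hlast
        rw [dif_neg (by omega : ¬ (n - 1 < n - 1)), dif_neg (by omega : ¬ (n - 1 < n - 1))] at hlast
        exact hlast
      · intro b hb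
        have hj : window s n (pos (glueR n b p)) = glueR n b p :=
          hpos _ ((Finset.mem_filter.mp hb).2)
        set j : ℤ := pos (glueR n b p) with hjdef
        have hsucc := window_succ hn hj
        have haA : s (j + (n : ℤ)) ∈ A := by
          refine Finset.mem_filter.mpr ⟨Finset.mem_univ _, ?_⟩
          rw [← hsucc]
          exact hmemW _
        refine ⟨s (j + (n : ℤ)), haA, ?_⟩
        have hspec := hpos _ ((Finset.mem_filter.mp haA).2)
        have hmod := hwin _ _ (by rw [hspec, hsucc] :
          window s n (pos (glueL n p (s (j + (n : ℤ))))) = window s n (j + 1))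
        have hmod' : pos (glueL n p (s (j + (n : ℤ)))) - 1 ≡ j [ZMOD (m : ℤ)] := by
          have := hmod.sub_right 1
          simpa using this
        have hww := hcong _ _ hmod'
        have h0 := congrFun hww ⟨0, by omega⟩
        simp only [window] at h0
        norm_num at h0
        rw [h0]
        have hb0 : s j = b := by
          have h3 := congrFun hj ⟨0, by omega⟩
          simpa [window, glueR] using h3
        exact hb0
    -- find a missing symbol
    have hmissing : ∃ c : ZMod q, c ∉ A ∪ B := by
      by_contra hcon
      push_neg at hcon
      have huniv : (Finset.univ : Finset (ZMod q)) ⊆ A ∪ B := fun c _ => hcon c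
      have hcard : q ≤ (A ∪ B).card := by
        have := Finset.card_le_card huniv
        rwa [Finset.card_univ, ZMod.card] at this
      have hcard2 : (A ∪ B).card = 2 * A.card := by
        rw [Finset.card_union_of_disjoint hdisj, hcardAB]
        omega
      have hle : (A ∪ B).card ≤ q := by
        have := Finset.card_le_univ (A ∪ B)
        rwa [ZMod.card] at this
      have : q = 2 * A.card := by omega
      rw [Nat.odd_iff] at hqodd
      omega
    obtain ⟨c, hc⟩ := hmissing
    rw [Finset.mem_union, not_or] at hc
    obtain ⟨hcA, hcB⟩ := hc
    refine ⟨c, ?_, ?_⟩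
    · intro hmem
      exact hcA (Finset.mem_filter.mpr ⟨Finset.mem_univ _, hmem⟩)
    · intro hmem
      obtain ⟨w, hw, hwu⟩ := Finset.mem_image.mp hmem
      have hw' : w = glueR n c p := by
        have := congrArg tupRev hwu
        rw [tupRev_tupRev, ← tupRev_glueR hn hp c, tupRev_tupRev] at this
        exact this
      rw [hw'] at hw
      exact hcB (Finset.mem_filter.mpr ⟨Finset.mem_univ _, hw⟩)
  -- make the choice of missing symbol a total function
  have keyE : ∃ cf : (Fin (n - 1) → ZMod q) → ZMod q,
      ∀ p : Fin (n - 1) → ZMod q, (∀ i, p i = p i.rev) → (¬ ∃ d, ∀ i, p i = d) →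
      glueL n p (cf p) ∉ W ∧ glueL n p (cf p) ∉ Wr := by
    choose cf h1 h2 using key
    refine ⟨fun p =>
      if h : (∀ i, p i = p i.rev) ∧ (¬ ∃ d, ∀ i, p i = d) then cf p h.1 h.2 else 0, ?_⟩
    intro p hp hnc
    have hcond : (∀ i, p i = p i.rev) ∧ (¬ ∃ d, ∀ i, p i = d) := ⟨hp, hnc⟩
    simp only [dif_pos hcond]
    exact ⟨h1 p hp hnc, h2 p hp hnc⟩
  obtain ⟨cf, hcf⟩ := keyE
  -- the four pairwise disjoint sets
  set SymS : Finset (Fin n → ZMod q) :=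
    Finset.univ.filter (fun u : Fin n → ZMod q => ∀ i, u i = u i.rev) with hSymSdef
  set NCP : Finset (Fin (n - 1) → ZMod q) :=
    Finset.univ.filter
      (fun p : Fin (n - 1) → ZMod q => (∀ i, p i = p i.rev) ∧ ¬ ∃ d, ∀ i, p i = d) with hNCPdef
  set M : Finset (Fin n → ZMod q) := NCP.image (fun p => glueL n p (cf p)) with hMdef
  have hNCPmem : ∀ p ∈ NCP, (∀ i, p i = p i.rev) ∧ ¬ ∃ d, ∀ i, p i = d := by
    intro p hp
    exact (Finset.mem_filter.mp hp).2
  have hcardNCP : NCP.card = q ^ (n / 2) - q := by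
    have hsub : (Finset.univ.filter fun u : Fin (n - 1) → ZMod q => ∃ d, ∀ i, u i = d)
        ⊆ (Finset.univ.filter fun u : Fin (n - 1) → ZMod q => ∀ i, u i = u i.rev) := by
      intro u hu
      obtain ⟨d, hd⟩ := (Finset.mem_filter.mp hu).2
      refine Finset.mem_filter.mpr ⟨Finset.mem_univ _, fun i => ?_⟩
      rw [hd, hd]
    have hsplit : NCP = (Finset.univ.filter fun u : Fin (n - 1) → ZMod q => ∀ i, u i = u i.rev)
        \ (Finset.univ.filter fun u : Fin (n - 1) → ZMod q => ∃ d, ∀ i, u i = d) := by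
      ext u
      simp only [hNCPdef, Finset.mem_filter, Finset.mem_sdiff, Finset.mem_univ, true_and]
    rw [hsplit, Finset.card_sdiff_of_subset hsub, card_pal, card_unif q (n - 1) (by omega)]
    have he : n - 1 + 1 = n := by omega
    rw [he]
  have hcardM : M.card = q ^ (n / 2) - q := by
    rw [hMdef, Finset.card_image_of_injOn, hcardNCP]
    intro p hp p' hp' hglue
    funext i
    have hi := i.isLt
    have h1 := congrFun hglue ⟨(i : ℕ), by omega⟩
    simp only [glueL] at h1
    rw [dif_pos (show (i : ℕ) < n - 1 by omega), dif_pos (show (i : ℕ) < n - 1 by omega)] at h1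
    convert h1 using 2
  have hcardSym : SymS.card = q ^ ((n + 1) / 2) := card_pal q n
  -- disjointness
  have symm_fix : ∀ u : Fin n → ZMod q, (∀ i, u i = u i.rev) → tupRev u = u := by
    intro u hu
    funext k
    exact (hu k).symm
  have hd_W_Wr : Disjoint W Wr := by
    rw [Finset.disjoint_left]
    intro u hu hur
    obtain ⟨i, hi⟩ := hWmem u hu
    obtain ⟨j, hj⟩ := hWrmem u hur
    exact horient i j (by rw [hi, ← hj])
  have hd_W_Sym : Disjoint W SymS := by
    rw [Finset.disjoint_left]
    intro u hu hus
    obtain ⟨i, hi⟩ := hWmem u hu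
    have hsym := (Finset.mem_filter.mp hus).2
    exact horient i i (by rw [hi, symm_fix u hsym])
  have hd_Wr_Sym : Disjoint Wr SymS := by
    rw [Finset.disjoint_left]
    intro u hur hus
    obtain ⟨j, hj⟩ := hWrmem u hur
    have hsym := (Finset.mem_filter.mp hus).2
    have h2 : tupRev u = window s n j := by rw [hj, tupRev_tupRev]
    have h1 : window s n j = u := by rw [← h2, symm_fix u hsym]
    exact horient j j (by rw [← hj]; exact h1)
  have hd_W_M : Disjoint W M := by
    rw [Finset.disjoint_right]
    intro u hum huw
    obtain ⟨p, hp, hpu⟩ := Finset.mem_image.mp hum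
    obtain ⟨hp1, hp2⟩ := hNCPmem p hp
    replace hpu : glueL n p (cf p) = u := hpu
    rw [← hpu] at huw
    exact (hcf p hp1 hp2).1 huw
  have hd_Wr_M : Disjoint Wr M := by
    rw [Finset.disjoint_right]
    intro u hum huw
    obtain ⟨p, hp, hpu⟩ := Finset.mem_image.mp hum
    obtain ⟨hp1, hp2⟩ := hNCPmem p hp
    replace hpu : glueL n p (cf p) = u := hpu
    rw [← hpu] at huw
    exact (hcf p hp1 hp2).2 huw
  have hd_Sym_M : Disjoint SymS M := by
    rw [Finset.disjoint_right]
    intro u hum hus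
    obtain ⟨p, hp, hpu⟩ := Finset.mem_image.mp hum
    obtain ⟨hp1, hp2⟩ := hNCPmem p hp
    replace hpu : glueL n p (cf p) = u := hpu
    have hsym := (Finset.mem_filter.mp hus).2
    have hfix := symm_fix u hsym
    have h4 : tupRev (glueL n p (cf p)) = glueL n p (cf p) := by rw [hpu]; exact hfix
    have h5 : glueL n p (cf p) = glueR n (cf p) p := by
      rw [← h4, ← tupRev_glueR hn hp1 (cf p)]
      exact tupRev_tupRev _
    exact hp2 (const_of_glueL_eq_glueR hn h5)
  -- final count
  have houter : Disjoint (W ∪ Wr) (SymS ∪ M) := by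
    simp only [Finset.disjoint_union_left, Finset.disjoint_union_right]
    tauto
  have htotal : ((W ∪ Wr) ∪ (SymS ∪ M)).card ≤ q ^ n := by
    have h1 := Finset.card_le_univ ((W ∪ Wr) ∪ (SymS ∪ M))
    rwa [Fintype.card_fun, ZMod.card, Fintype.card_fin] at h1
  rw [Finset.card_union_of_disjoint houter, Finset.card_union_of_disjoint hd_W_Wr,
    Finset.card_union_of_disjoint hd_Sym_M, hcardW, hcardWr, hcardSym, hcardM] at htotal
  have hq_le : q ≤ q ^ (n / 2) := by
    calc q = q ^ 1 := (pow_one q).symm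
      _ ≤ q ^ (n / 2) := Nat.pow_le_pow_right (by omega) (by omega)
  zify [hq_le] at htotal
  push_cast at htotal ⊢
  linarith
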